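/- arXiv:2101.07249 — 5 statements merged into one kernel-verified Lean document; each statement's English description precedes it below -/
import Mathlib

section
/- Let A be an n×n real symmetric positive definite matrix and let S be an n×k real matrix (k ≤ n) with linearly independent columns. Then SᵀAS is invertible and the limited memory preconditioner P_k = (I − S(SᵀAS)⁻¹SᵀA)(I − AS(SᵀAS)⁻¹Sᵀ) + S(SᵀAS)⁻¹Sᵀ is symmetric positive definite. -/
open Matrix

theorem stmt_5 (n k : ℕ) (hk : k ≤ n)
    (A : Matrix (Fin n) (Fin n) ℝ) (hA : A.PosDef)
    (S : Matrix (Fin n) (Fin k) ℝ)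
    (hS : LinearIndependent ℝ (fun j : Fin k => fun i : Fin n => S i j)) :
    IsUnit (Sᵀ * A * S) ∧
    ((1 - S * (Sᵀ * A * S)⁻¹ * Sᵀ * A) * (1 - A * S * (Sᵀ * A * S)⁻¹ * Sᵀ) +
      S * (Sᵀ * A * S)⁻¹ * Sᵀ).PosDef := by
  have hAT : Aᵀ = A := by
    have := hA.isHermitian
    rwa [Matrix.IsHermitian, conjTranspose_eq_transpose_of_trivial] at this
  have hSinj : Function.Injective S.mulVec := by
    rw [Matrix.mulVec_injective_iff]
    exact hS
  set M := Sᵀ * A * S with hMdef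
  have hM : M.PosDef := by
    rw [posDef_iff_dotProduct_mulVec]
    constructor
    · rw [Matrix.IsHermitian, conjTranspose_eq_transpose_of_trivial, hMdef,
        transpose_mul, transpose_mul, transpose_transpose, hAT, Matrix.mul_assoc]
    · intro x hx
      have hx' : S *ᵥ x ≠ 0 := fun h => hx (hSinj (by simpa using h))
      have := hA.dotProduct_mulVec_pos hx'
      simpa [hMdef, ← mulVec_mulVec, dotProduct_mulVec, vecMul_transpose] using this
  have hMinvT : (M⁻¹)ᵀ = M⁻¹ := by
    have h1 : Mᵀ = M := by
      have := hM.isHermitian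
      rwa [Matrix.IsHermitian, conjTranspose_eq_transpose_of_trivial] at this
    rw [transpose_nonsing_inv, h1]
  refine ⟨hM.isUnit, ?_⟩
  have hMinv : (M⁻¹).PosDef := hM.inv
  set N := 1 - A * S * M⁻¹ * Sᵀ with hNdef
  have hNT : (1 - S * M⁻¹ * Sᵀ * A) = Nᵀ := by
    rw [hNdef, transpose_sub, transpose_one, transpose_mul, transpose_mul, transpose_mul,
      transpose_transpose, hAT, hMinvT, ← Matrix.mul_assoc, ← Matrix.mul_assoc]
  rw [hNT]
  rw [posDef_iff_dotProduct_mulVec]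
  constructor
  · rw [Matrix.IsHermitian, conjTranspose_eq_transpose_of_trivial]
    rw [transpose_add, transpose_mul, transpose_mul, transpose_mul, transpose_transpose,
      transpose_transpose, hMinvT, ← Matrix.mul_assoc]
  · intro x hx
    have key : (star x) ⬝ᵥ ((Nᵀ * N + S * M⁻¹ * Sᵀ) *ᵥ x)
        = (N *ᵥ x) ⬝ᵥ (N *ᵥ x) + (Sᵀ *ᵥ x) ⬝ᵥ (M⁻¹ *ᵥ (Sᵀ *ᵥ x)) := by
      simp only [star_trivial, add_mulVec, dotProduct_add, ← mulVec_mulVec]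
      congr 1
      · rw [mulVec_transpose, dotProduct_mulVec, dotProduct_comm]
      · rw [mulVec_transpose, dotProduct_mulVec, dotProduct_mulVec]
    rw [key]
    by_cases hSx : Sᵀ *ᵥ x = 0
    · have hNx : N *ᵥ x = x := by
        rw [hNdef, sub_mulVec, one_mulVec, ← mulVec_mulVec, hSx, mulVec_zero, sub_zero]
      rw [hSx, mulVec_zero, dotProduct_zero, add_zero, hNx]
      have := dotProduct_self_star_pos_iff (v := x) |>.mpr hx
      simpa using this
    · have h1 : 0 ≤ (N *ᵥ x) ⬝ᵥ (N *ᵥ x) := by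
        have := dotProduct_self_star_nonneg (N *ᵥ x)
        simpa using this
      have h2 : 0 < (Sᵀ *ᵥ x) ⬝ᵥ (M⁻¹ *ᵥ (Sᵀ *ᵥ x)) := by
        have := hMinv.dotProduct_mulVec_pos hSx
        simpa using this
      linarith
end

section
/- Let A be an n×n real symmetric positive definite matrix and let S be an n×k real matrix (k ≤ n) with linearly independent columns, and let P_k = (I − S(SᵀAS)⁻¹SᵀA)(I − AS(SᵀAS)⁻¹Sᵀ) + S(SᵀAS)⁻¹Sᵀ be the limited memory preconditioner. Then P_k A S = S; in particular every nonzero vector in the column space of S is an eigenvector of P_k A with eigenvalue 1, so the preconditioned matrix P_k A has the eigenvalue 1 with eigenspace of dimension at least k. -/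
open Matrix

theorem stmt_7 (n k : ℕ) (hk : k ≤ n)
    (A : Matrix (Fin n) (Fin n) ℝ) (hA : A.PosDef)
    (S : Matrix (Fin n) (Fin k) ℝ)
    (hS : LinearIndependent ℝ (fun j : Fin k => fun i : Fin n => S i j))
    (P : Matrix (Fin n) (Fin n) ℝ)
    (hP : P = (1 - S * (Sᵀ * A * S)⁻¹ * Sᵀ * A) * (1 - A * S * (Sᵀ * A * S)⁻¹ * Sᵀ) +
      S * (Sᵀ * A * S)⁻¹ * Sᵀ) :
    P * A * S = S ∧
    (∀ x ∈ LinearMap.range S.mulVecLin, x ≠ 0 → (P * A) *ᵥ x = x) ∧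
    k ≤ Module.finrank ℝ (Module.End.eigenspace (Matrix.toLin' (P * A)) 1) := by
  have hinj : Function.Injective S.mulVecLin := Matrix.mulVec_injective_iff.mpr hS
  -- Sᵀ A S is positive definite
  have hps : (Sᵀ * A * S).PosSemidef := by
    have := hA.posSemidef.conjTranspose_mul_mul_same S
    rwa [conjTranspose_eq_transpose_of_trivial] at this
  have hM : (Sᵀ * A * S).PosDef := by
    refine Matrix.PosDef.of_dotProduct_mulVec_pos hps.1 (fun x hx => ?_)
    have hSx : S *ᵥ x ≠ 0 := fun h => hx (hinj (by simpa using h))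
    have h0 := hA.dotProduct_mulVec_pos hSx
    have heq : star x ⬝ᵥ (Sᵀ * A * S) *ᵥ x = star (S *ᵥ x) ⬝ᵥ A *ᵥ (S *ᵥ x) := by
      rw [← Matrix.mulVec_mulVec, ← Matrix.mulVec_mulVec, Matrix.dotProduct_mulVec,
        star_trivial, Matrix.vecMul_transpose, star_trivial]
    rw [heq]
    exact h0
  have h1 : (Sᵀ * (A * S))⁻¹ * (Sᵀ * (A * S)) = 1 := by
    have := Matrix.nonsing_inv_mul (Sᵀ * A * S) hM.det_pos.ne'.isUnit
    simpa [Matrix.mul_assoc] using this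
  have key : P * A * S = S := by
    subst hP
    simp only [Matrix.add_mul, Matrix.sub_mul, Matrix.mul_sub, Matrix.one_mul, Matrix.mul_one,
      Matrix.mul_assoc, h1]
    abel
  refine ⟨key, ?_, ?_⟩
  · rintro x ⟨v, rfl⟩ -
    simp only [Matrix.mulVecLin_apply, Matrix.mulVec_mulVec, key]
  · have hle : LinearMap.range S.mulVecLin ≤
        Module.End.eigenspace (Matrix.toLin' (P * A)) 1 := by
      rintro x ⟨v, rfl⟩
      rw [Module.End.mem_eigenspace_iff, one_smul]
      simp only [Matrix.toLin'_apply, Matrix.mulVecLin_apply, Matrix.mulVec_mulVec, key]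
    calc k = Module.finrank ℝ (LinearMap.range S.mulVecLin) :=
            (LinearMap.finrank_range_of_inj hinj).symm ▸ by simp [Module.finrank_fintype_fun_eq_card]
      _ ≤ _ := Submodule.finrank_mono hle
end

section
/- Let A be an n×n real symmetric positive definite matrix, let v_1, …, v_k ∈ ℝ^n be orthonormal eigenvectors of A with corresponding (necessarily positive) eigenvalues λ_1, …, λ_k, and let V be the n×k matrix with columns v_1, …, v_k. Then the limited memory preconditioner P_k = (I − V(VᵀAV)⁻¹VᵀA)(I − AV(VᵀAV)⁻¹Vᵀ) + V(VᵀAV)⁻¹Vᵀ equals the spectral-LMP P_k^{sp} = I − Σ_{i=1}^{k} (1 − λ_i⁻¹) v_i v_iᵀ. -/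
open Matrix

theorem stmt_8 (n k : ℕ) (hk : k ≤ n)
    (A : Matrix (Fin n) (Fin n) ℝ) (hA : A.PosDef)
    (v : Fin k → Fin n → ℝ) (lam : Fin k → ℝ)
    (horth : ∀ i j : Fin k, v i ⬝ᵥ v j = if i = j then (1 : ℝ) else 0)
    (heig : ∀ i : Fin k, A *ᵥ v i = lam i • v i)
    (V : Matrix (Fin n) (Fin k) ℝ)
    (hV : V = Matrix.of (fun r j => v j r)) :
    (1 - V * (Vᵀ * A * V)⁻¹ * Vᵀ * A) * (1 - A * V * (Vᵀ * A * V)⁻¹ * Vᵀ) +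
      V * (Vᵀ * A * V)⁻¹ * Vᵀ =
    1 - ∑ i : Fin k, (1 - (lam i)⁻¹) • vecMulVec (v i) (v i) := by
  subst hV
  set V : Matrix (Fin n) (Fin k) ℝ := Matrix.of (fun r j => v j r) with hVdef
  have hAsym : Aᵀ = A := by
    ext i j
    have := congrFun (congrFun hA.1 i) j
    simpa [Matrix.conjTranspose_apply] using this
  have hvne : ∀ i : Fin k, v i ≠ 0 := by
    intro i h
    have := horth i i
    simp [h] at this
  have hlam : ∀ i : Fin k, lam i ≠ 0 := by
    intro i
    have hpos := hA.dotProduct_mulVec_pos (hvne i)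
    rw [heig i] at hpos
    simp only [star_trivial, dotProduct_smul, smul_eq_mul] at hpos
    rw [horth i i, if_pos rfl, mul_one] at hpos
    exact ne_of_gt hpos
  have hVtV : Vᵀ * V = 1 := by
    ext i j
    simpa [hVdef, Matrix.mul_apply, dotProduct, Matrix.one_apply] using horth i j
  have hAV : A * V = V * Matrix.diagonal lam := by
    ext r j
    have := congrFun (heig j) r
    simp only [mulVec, dotProduct, Pi.smul_apply, smul_eq_mul] at this
    simp [hVdef, Matrix.mul_apply, Matrix.diagonal, this, mul_comm]
  have hVtA : Vᵀ * A = Matrix.diagonal lam * Vᵀ := by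
    have := congrArg Matrix.transpose hAV
    simpa [Matrix.transpose_mul, hAsym, Matrix.diagonal_transpose] using this
  have hVAV : Vᵀ * A * V = Matrix.diagonal lam := by
    rw [Matrix.mul_assoc, hAV, ← Matrix.mul_assoc, hVtV, Matrix.one_mul]
  have hDD : Matrix.diagonal lam * Matrix.diagonal (fun i => (lam i)⁻¹) = 1 := by
    rw [Matrix.diagonal_mul_diagonal]
    ext i j
    by_cases h : i = j <;> simp [Matrix.diagonal, Matrix.one_apply, h, mul_inv_cancel₀, hlam]
  have hDD' : Matrix.diagonal (fun i => (lam i)⁻¹) * Matrix.diagonal lam = 1 := by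
    rw [Matrix.diagonal_mul_diagonal]
    ext i j
    by_cases h : i = j <;> simp [Matrix.diagonal, Matrix.one_apply, h, inv_mul_cancel₀, hlam]
  have hDinv : (Matrix.diagonal lam)⁻¹ = Matrix.diagonal (fun i => (lam i)⁻¹) :=
    Matrix.inv_eq_right_inv hDD
  rw [hVAV, hDinv]
  set D' := Matrix.diagonal (fun i => (lam i)⁻¹) with hD'
  have h1 : V * D' * Vᵀ * A = V * Vᵀ := by
    calc V * D' * Vᵀ * A = V * (D' * (Vᵀ * A)) := by simp only [Matrix.mul_assoc]
      _ = V * (D' * (Matrix.diagonal lam * Vᵀ)) := by rw [hVtA]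
      _ = V * ((D' * Matrix.diagonal lam) * Vᵀ) := by simp only [Matrix.mul_assoc]
      _ = V * Vᵀ := by rw [hDD', Matrix.one_mul]
  have h2 : A * V * D' * Vᵀ = V * Vᵀ := by
    calc A * V * D' * Vᵀ = (A * V) * D' * Vᵀ := rfl
      _ = V * Matrix.diagonal lam * D' * Vᵀ := by rw [hAV]
      _ = V * (Matrix.diagonal lam * D') * Vᵀ := by rw [Matrix.mul_assoc V]
      _ = V * Vᵀ := by rw [hDD, Matrix.mul_one]
  rw [h1, h2]
  have hPP : (V * Vᵀ) * (V * Vᵀ) = V * Vᵀ := by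
    rw [Matrix.mul_assoc, ← Matrix.mul_assoc Vᵀ, hVtV, Matrix.one_mul]
  have hexp : (1 - V * Vᵀ) * (1 - V * Vᵀ) + V * D' * Vᵀ
      = 1 - V * Vᵀ + V * D' * Vᵀ := by
    rw [Matrix.sub_mul, Matrix.mul_sub, Matrix.mul_sub, hPP]
    simp only [Matrix.mul_one, Matrix.one_mul]
    abel
  rw [hexp]
  have hsum1 : V * Vᵀ = ∑ i : Fin k, vecMulVec (v i) (v i) := by
    ext r s
    simp [hVdef, Matrix.mul_apply, Matrix.sum_apply, vecMulVec_apply]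
  have hsum2 : V * D' * Vᵀ = ∑ i : Fin k, (lam i)⁻¹ • vecMulVec (v i) (v i) := by
    ext r s
    simp only [Matrix.sum_apply, Matrix.smul_apply, vecMulVec_apply, smul_eq_mul]
    rw [Matrix.mul_apply]
    simp only [hD', Matrix.mul_diagonal, hVdef, Matrix.of_apply, Matrix.transpose_apply]
    exact Finset.sum_congr rfl fun i _ => by ring
  simp only [sub_smul, one_smul, Finset.sum_sub_distrib]
  rw [hsum1, hsum2]
  abel
end

section
/- Let A be an n×n real symmetric positive definite matrix and let v_1, …, v_k ∈ ℝ^n be orthonormal eigenvectors of A with corresponding positive eigenvalues λ_1, …, λ_k. Define C_k^{sp} = ∏_{i=1}^{k} (I − (1 − (√λ_i)⁻¹) v_i v_iᵀ). Then C_k^{sp} (C_k^{sp})ᵀ = I − Σ_{i=1}^{k} (1 − λ_i⁻¹) v_i v_iᵀ; that is, C_k^{sp} is a factor of the spectral-LMP P_k^{sp} = C_k^{sp}(C_k^{sp})ᵀ. -/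
open Matrix

private lemma vmv_mul {n : ℕ} (w x y z : Fin n → ℝ) :
    vecMulVec w x * vecMulVec y z = (x ⬝ᵥ y) • vecMulVec w z := by
  ext a b
  simp only [mul_apply, vecMulVec_apply, Matrix.smul_apply, dotProduct, smul_eq_mul,
    Finset.sum_mul, Finset.mul_sum]
  apply Finset.sum_congr rfl
  intro c _
  ring

private lemma prod_one_sub {k N : ℕ} (P : Fin k → Matrix (Fin N) (Fin N) ℝ)
    (hP : ∀ i j, P i * P j = if i = j then P i else 0) (c : Fin k → ℝ) :
    ∀ l : List (Fin k), l.Nodup →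
      (l.map (fun i => 1 - c i • P i)).prod = 1 - (l.map (fun i => c i • P i)).sum := by
  intro l
  induction l with
  | nil => simp
  | cons h t ih =>
    intro hnd
    rw [List.nodup_cons] at hnd
    obtain ⟨hht, hndt⟩ := hnd
    have hz : (P h) * (t.map (fun i => c i • P i)).sum = 0 := by
      rw [← List.sum_map_mul_left]
      apply List.sum_eq_zero
      intro x hx
      simp only [List.map_map, List.mem_map, Function.comp] at hx
      obtain ⟨i, hi, rfl⟩ := hx
      have hne : h ≠ i := fun e => hht (e ▸ hi)
      rw [Matrix.mul_smul, hP h i, if_neg hne, smul_zero]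
    simp only [List.map_cons, List.prod_cons, List.sum_cons, ih hndt]
    rw [sub_mul, one_mul, mul_sub, mul_one, Matrix.smul_mul, hz, smul_zero, sub_zero]
    abel

theorem stmt_9 (n k : ℕ) (hk : k ≤ n)
    (A : Matrix (Fin n) (Fin n) ℝ) (hA : A.PosDef)
    (v : Fin k → Fin n → ℝ) (lam : Fin k → ℝ)
    (horth : ∀ i j : Fin k, v i ⬝ᵥ v j = if i = j then (1 : ℝ) else 0)
    (heig : ∀ i : Fin k, A *ᵥ v i = lam i • v i)
    (hpos : ∀ i : Fin k, 0 < lam i)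
    (C : Matrix (Fin n) (Fin n) ℝ)
    (hC : C = ((List.finRange k).map
      (fun i => 1 - (1 - (Real.sqrt (lam i))⁻¹) • vecMulVec (v i) (v i))).prod) :
    C * Cᵀ = 1 - ∑ i : Fin k, (1 - (lam i)⁻¹) • vecMulVec (v i) (v i) := by
  set P : Fin k → Matrix (Fin n) (Fin n) ℝ := fun i => vecMulVec (v i) (v i) with hPdef
  have hP : ∀ i j, P i * P j = if i = j then P i else 0 := by
    intro i j
    simp only [hPdef, vmv_mul, horth i j]
    split <;> simp_all
  set c : Fin k → ℝ := fun i => 1 - (Real.sqrt (lam i))⁻¹ with hcdef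
  have hCeq : C = 1 - ∑ i : Fin k, c i • P i := by
    rw [hC, prod_one_sub P hP c _ (List.nodup_finRange k), Fin.sum_univ_def]
  have hsym : Cᵀ = C := by
    rw [hCeq, transpose_sub, transpose_one, transpose_sum]
    congr 1
    apply Finset.sum_congr rfl
    intro i _
    rw [transpose_smul]
    congr 1
    ext a b
    simp [hPdef, vecMulVec_apply, mul_comm]
  set S : Matrix (Fin n) (Fin n) ℝ := ∑ i : Fin k, c i • P i with hS
  have hSS : S * S = ∑ i : Fin k, (c i * c i) • P i := by
    rw [hS, Finset.sum_mul_sum]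
    rw [Finset.sum_comm]
    apply Finset.sum_congr rfl
    intro j _
    rw [Finset.sum_eq_single j]
    · rw [Matrix.smul_mul, Matrix.mul_smul, hP j j, if_pos rfl, smul_smul]
    · intro i _ hij
      rw [Matrix.smul_mul, Matrix.mul_smul, hP i j, if_neg hij, smul_zero, smul_zero]
    · intro h; exact absurd (Finset.mem_univ j) h
  rw [hsym, hCeq, sub_mul, one_mul, mul_sub, mul_one]
  have key : ∀ i : Fin k, c i • P i + c i • P i - (c i * c i) • P i
      = (1 - (lam i)⁻¹) • P i := by
    intro i
    rw [← add_smul, ← sub_smul]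
    congr 1
    have hl : Real.sqrt (lam i) * Real.sqrt (lam i) = lam i :=
      Real.mul_self_sqrt (hpos i).le
    have : (Real.sqrt (lam i))⁻¹ * (Real.sqrt (lam i))⁻¹ = (lam i)⁻¹ := by
      rw [← mul_inv, hl]
    rw [hcdef]
    simp only
    ring_nf
    rw [sq, this]
  calc 1 - S - (S - S * S) = 1 - (S + S - S * S) := by abel
    _ = 1 - ∑ i : Fin k, (1 - (lam i)⁻¹) • P i := by
        rw [hS, hSS, ← Finset.sum_add_distrib, ← Finset.sum_sub_distrib]
        congr 1
        exact Finset.sum_congr rfl fun i _ => key i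
end

section
/- Let A be an n×n real symmetric positive definite matrix with a full orthonormal eigenbasis v_1, …, v_n ∈ ℝ^n and corresponding positive eigenvalues λ_1, …, λ_n. For k ≤ n let C = ∏_{i=1}^{k} (I − (1 − (√λ_i)⁻¹) v_i v_iᵀ). Then the split-preconditioned matrix CᵀAC satisfies CᵀAC v_i = v_i for every i ≤ k and CᵀAC v_j = λ_j v_j for every j > k; i.e., CᵀAC has eigenvalue 1 with the eigenvectors v_1, …, v_k, and its remaining eigenvalues are the unpreconditioned eigenvalues λ_{k+1}, …, λ_n with the same eigenvectors. -/
open Matrix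

private lemma vecMulVec_mulVec' {n : ℕ} (w u x : Fin n → ℝ) :
    vecMulVec w u *ᵥ x = (u ⬝ᵥ x) • w := by
  ext i
  simp [mulVec, vecMulVec_apply, dotProduct, Finset.mul_sum, mul_comm, mul_assoc, mul_left_comm]

private lemma vecMulVec_transpose' {n : ℕ} (w u : Fin n → ℝ) :
    (vecMulVec w u)ᵀ = vecMulVec u w := by
  ext i j
  simp [vecMulVec_apply, mul_comm]

private lemma listprod_mulVec {n : ℕ} {α : Type*} (w : Fin n → ℝ)
    (f : α → Matrix (Fin n) (Fin n) ℝ) (g : α → ℝ) :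
    ∀ (L : List α), (∀ a ∈ L, f a *ᵥ w = g a • w) →
      ((L.map f).prod) *ᵥ w = (L.map g).prod • w := by
  intro L
  induction L with
  | nil => simp
  | cons a L ih =>
    intro h
    simp only [List.map_cons, List.prod_cons, ← mulVec_mulVec]
    rw [ih (fun b hb => h b (List.mem_cons_of_mem a hb)), mulVec_smul,
      h a List.mem_cons_self, smul_smul, mul_comm]

theorem stmt_10 (n k : ℕ) (hk : k ≤ n)
    (A : Matrix (Fin n) (Fin n) ℝ) (hA : A.PosDef)
    (v : Fin n → Fin n → ℝ) (lam : Fin n → ℝ)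
    (horth : ∀ i j : Fin n, v i ⬝ᵥ v j = if i = j then (1 : ℝ) else 0)
    (heig : ∀ i : Fin n, A *ᵥ v i = lam i • v i)
    (hpos : ∀ i : Fin n, 0 < lam i)
    (C : Matrix (Fin n) (Fin n) ℝ)
    (hC : C = ((List.finRange k).map
      (fun i => 1 - (1 - (Real.sqrt (lam (Fin.castLE hk i)))⁻¹) •
        vecMulVec (v (Fin.castLE hk i)) (v (Fin.castLE hk i)))).prod) :
    (∀ i : Fin n, (i : ℕ) < k → (Cᵀ * A * C) *ᵥ v i = v i) ∧
    (∀ j : Fin n, k ≤ (j : ℕ) → (Cᵀ * A * C) *ᵥ v j = lam j • v j) := by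
  set f : Fin k → Matrix (Fin n) (Fin n) ℝ := fun i =>
    1 - (1 - (Real.sqrt (lam (Fin.castLE hk i)))⁻¹) •
      vecMulVec (v (Fin.castLE hk i)) (v (Fin.castLE hk i)) with hf
  set g : Fin n → Fin k → ℝ := fun j i =>
    if Fin.castLE hk i = j then (Real.sqrt (lam j))⁻¹ else 1 with hg
  -- action of each factor on each eigenvector
  have hact : ∀ (j : Fin n) (i : Fin k), f i *ᵥ v j = g j i • v j := by
    intro j i
    simp only [hf, hg]
    rw [sub_mulVec, one_mulVec, smul_mulVec, vecMulVec_mulVec', horth]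
    by_cases hij : Fin.castLE hk i = j
    · subst hij
      simp only [if_pos rfl, if_true, eq_self_iff_true, one_smul, smul_smul, mul_one]
      module
    · simp [hij]
  -- product of scalars
  have hprod : ∀ j : Fin n, ((List.finRange k).map (g j)).prod =
      if (j : ℕ) < k then (Real.sqrt (lam j))⁻¹ else 1 := by
    intro j
    rw [← Fin.prod_univ_def]
    by_cases hj : (j : ℕ) < k
    · rw [if_pos hj]
      have : ∀ i : Fin k, g j i = if i = ⟨j, hj⟩ then (Real.sqrt (lam j))⁻¹ else 1 := by
        intro i
        simp only [hg, Fin.ext_iff, Fin.coe_castLE]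
      simp only [this]
      rw [Finset.prod_ite_eq' Finset.univ (⟨j, hj⟩ : Fin k)
        (fun _ => (Real.sqrt (lam j))⁻¹)]
      simp
    · rw [if_neg hj]
      apply Finset.prod_eq_one
      intro i _
      have : Fin.castLE hk i ≠ j := by
        intro h
        apply hj
        rw [← h, Fin.coe_castLE]
        exact i.isLt
      simp [hg, this]
  set c : Fin n → ℝ := fun j => if (j : ℕ) < k then (Real.sqrt (lam j))⁻¹ else 1 with hcdef
  have hCv : ∀ j : Fin n, C *ᵥ v j = c j • v j := by
    intro j
    rw [hC, listprod_mulVec (v j) f (g j) (List.finRange k)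
      (fun a _ => hact j a), hprod]
  -- symmetry of the factors and transpose of C
  have hsym : ∀ i, (f i)ᵀ = f i := by
    intro i
    simp [hf, transpose_sub, transpose_smul, vecMulVec_transpose']
  have hCt : ∀ j : Fin n, Cᵀ *ᵥ v j = c j • v j := by
    intro j
    have : Cᵀ = (((List.finRange k).reverse).map f).prod := by
      rw [hC, transpose_list_prod, List.map_map, List.map_reverse]
      rw [show transpose ∘ f = f from funext hsym, ← List.map_reverse]
    rw [this, listprod_mulVec (v j) f (g j) ((List.finRange k).reverse)
      (fun a _ => hact j a), List.map_reverse, List.prod_reverse, hprod]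
  -- combine
  have key : ∀ j : Fin n, (Cᵀ * A * C) *ᵥ v j = (c j * lam j * c j) • v j := by
    intro j
    rw [← mulVec_mulVec, ← mulVec_mulVec, hCv j, mulVec_smul, heig j, smul_smul,
      mulVec_smul, hCt j, smul_smul]
  constructor
  · intro i hi
    rw [key i]
    have hs : Real.sqrt (lam i) ≠ 0 := (Real.sqrt_pos.mpr (hpos i)).ne'
    have hmul : Real.sqrt (lam i) * Real.sqrt (lam i) = lam i :=
      Real.mul_self_sqrt (hpos i).le
    have : c i * lam i * c i = 1 := by
      simp only [hcdef, if_pos hi]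
      field_simp
      rw [Real.sq_sqrt (hpos i).le]
    rw [this, one_smul]
  · intro j hj
    rw [key j]
    have : c j = 1 := by simp [hcdef, Nat.not_lt.mpr hj]
    rw [this, one_mul, mul_one]
end
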